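/- Let d and s be positive integers, let G be a theta-free graph and let Y be a stable set in G of cardinality 3s(d+1). Let P be an induced path in G \ Y such that every vertex in Y has a neighbor in P, and each vertex of P has fewer than d neighbors in Y. Assume that for every two vertices y, y' ∈ Y there is an induced path R in G from y to y' such that V(P) and the interior of R are disjoint and anticomplete in G. Then there is a subset S of Y with |S| = s such that (P, S) is a consistent alignment. -/

import Mathlib

open SimpleGraph

namespace Paper

variable {V : Type}

/-- Two vertex sets are anticomplete: no edges between them. -/
def Anticomplete (G : SimpleGraph V) (A B : Set V) : Prop :=
  ∀ a ∈ A, ∀ b ∈ B, ¬ G.Adj a b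

/-- A stable (independent) set of vertices. -/
def StableSet (G : SimpleGraph V) (A : Set V) : Prop :=
  ∀ x ∈ A, ∀ y ∈ A, x ≠ y → ¬ G.Adj x y

/-- A walk is induced in `G`: any two adjacent vertices on it are consecutive. -/
def InducedWalk (G : SimpleGraph V) {u v : V} (P : G.Walk u v) : Prop :=
  ∀ x ∈ P.support, ∀ y ∈ P.support, G.Adj x y → s(x, y) ∈ P.edges

/-- The interior (set of internal vertices) of a walk from `u` to `v`. -/
def Interior {G : SimpleGraph V} {u v : V} (P : G.Walk u v) : Set V :=
  {w | w ∈ P.support ∧ w ≠ u ∧ w ≠ v}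

/-- Closed neighborhood of a set of vertices. -/
def ClosedNbhd (G : SimpleGraph V) (A : Set V) : Set V :=
  A ∪ {v | ∃ a ∈ A, G.Adj v a}

/-- Open neighborhood of a set of vertices. -/
def OpenNbhd (G : SimpleGraph V) (A : Set V) : Set V :=
  {v | v ∉ A ∧ ∃ a ∈ A, G.Adj v a}

/-- `M` separates `x` and `y` in `G`: there is a separation `(L, M, R)` with `x ∈ L`, `y ∈ R`. -/
def Separates (G : SimpleGraph V) (M : Set V) (x y : V) : Prop :=
  ∃ L R : Set V,
    L ∪ M ∪ R = Set.univ ∧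
    Disjoint L M ∧ Disjoint L R ∧ Disjoint M R ∧
    L.Nonempty ∧ R.Nonempty ∧ Anticomplete G L R ∧ x ∈ L ∧ y ∈ R

/-- `G` contains a theta as an induced subgraph. -/
def ContainsTheta (G : SimpleGraph V) : Prop :=
  ∃ (a b : V) (P₁ P₂ P₃ : G.Walk a b),
    a ≠ b ∧ ¬ G.Adj a b ∧
    P₁.IsPath ∧ P₂.IsPath ∧ P₃.IsPath ∧
    InducedWalk G P₁ ∧ InducedWalk G P₂ ∧ InducedWalk G P₃ ∧
    2 ≤ P₁.length ∧ 2 ≤ P₂.length ∧ 2 ≤ P₃.length ∧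
    Disjoint (Interior P₁) (Interior P₂) ∧
    Disjoint (Interior P₁) (Interior P₃) ∧
    Disjoint (Interior P₂) (Interior P₃) ∧
    Anticomplete G (Interior P₁) (Interior P₂) ∧
    Anticomplete G (Interior P₁) (Interior P₃) ∧
    Anticomplete G (Interior P₂) (Interior P₃)

/-- `G` contains a prism as an induced subgraph (one path may have length zero). -/
def ContainsPrism (G : SimpleGraph V) : Prop :=
  ∃ (a b : Fin 3 → V) (P : ∀ i, G.Walk (a i) (b i)),
    (∀ i j, i ≠ j → G.Adj (a i) (a j)) ∧
    (∀ i j, i ≠ j → G.Adj (b i) (b j)) ∧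
    (∀ i, (P i).IsPath) ∧ (∀ i, InducedWalk G (P i)) ∧
    (∀ i j, i ≠ j → ∀ x, x ∈ (P i).support → x ∉ (P j).support) ∧
    (∀ i j, i ≠ j → ∀ x ∈ (P i).support, ∀ y ∈ (P j).support,
        G.Adj x y → (x = a i ∧ y = a j) ∨ (x = b i ∧ y = b j)) ∧
    (∀ i j, i ≠ j → 2 ≤ (P i).length + (P j).length)

/-- `G` contains `K_{1,t}` as an induced subgraph. -/
def ContainsK1t (G : SimpleGraph V) (t : ℕ) : Prop :=
  ∃ (v : V) (S : Finset V),
    S.card = t ∧ v ∉ S ∧ (∀ x ∈ S, G.Adj v x) ∧ StableSet G ↑S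

/-- `G` belongs to the class `C_t` of (theta, prism, `K_{1,t}`)-free graphs. -/
def MemCt (t : ℕ) (G : SimpleGraph V) : Prop :=
  ¬ ContainsTheta G ∧ ¬ ContainsPrism G ∧ ¬ ContainsK1t G t

/-- A tree decomposition of `G`. -/
structure TreeDecomp (G : SimpleGraph V) where
  ι : Type
  T : SimpleGraph ι
  isTree : T.IsTree
  bag : ι → Set V
  mem_bag : ∀ v : V, ∃ i, v ∈ bag i
  edge_bag : ∀ u v : V, G.Adj u v → ∃ i, u ∈ bag i ∧ v ∈ bag i
  bag_connected : ∀ v : V, (T.induce {i | v ∈ bag i}).Connected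

/-- The tree independence number of `G` is at most `k`. -/
def TreeAlphaLE (G : SimpleGraph V) (k : ℕ) : Prop :=
  ∃ D : TreeDecomp G, ∀ i : D.ι, ∀ S : Finset V,
    ↑S ⊆ D.bag i → StableSet G ↑S → S.card ≤ k

/-- Sum of weights over a vertex set. -/
noncomputable def wSum [Fintype V] (w : V → ℝ) (A : Set V) : ℝ :=
  ∑ v, A.indicator w v

/-- `D` is a connected component of `G \ X`. -/
def IsComponentOf (G : SimpleGraph V) (X D : Set V) : Prop :=
  D.Nonempty ∧ D ⊆ Xᶜ ∧ (G.induce D).Connected ∧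
  ∀ D' : Set V, D ⊆ D' → D' ⊆ Xᶜ → (G.induce D').Connected → D' = D

/-- `X` is a `w`-balanced separator in `G`. -/
def BalancedSeparator [Fintype V] (G : SimpleGraph V) (w : V → ℝ) (X : Set V) : Prop :=
  ∀ D : Set V, IsComponentOf G X D → wSum w D ≤ 1 / 2

/-- A closed walk is a hole (induced cycle of length at least four) in `G`. -/
def IsHoleWalk (G : SimpleGraph V) {h : V} (H : G.Walk h h) : Prop :=
  H.IsCycle ∧ 4 ≤ H.length ∧ InducedWalk G H

/-- The neighbors of `c` on the hole `H`. -/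
def HoleNbrs (G : SimpleGraph V) {h : V} (H : G.Walk h h) (c : V) : Set V :=
  {v | v ∈ H.support ∧ G.Adj c v}

/-- `(H, c)` is a wheel in `G`. -/
def IsWheel (G : SimpleGraph V) {h : V} (H : G.Walk h h) (c : V) : Prop :=
  IsHoleWalk G H ∧ c ∉ H.support ∧ 3 ≤ (HoleNbrs G H c).ncard

/-- `P` is a sector of the wheel `(H, c)`. -/
def IsSector (G : SimpleGraph V) {h : V} (H : G.Walk h h) (c : V)
    {x y : V} (P : G.Walk x y) : Prop :=
  P.IsPath ∧ 0 < P.length ∧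
  (∀ w ∈ P.support, w ∈ H.support) ∧
  (∀ e ∈ P.edges, e ∈ H.edges) ∧
  G.Adj c x ∧ G.Adj c y ∧
  ∀ w ∈ P.support, w ≠ x → w ≠ y → ¬ G.Adj c w

/-- The wheel `(H, c)` is special. -/
def IsSpecialWheel (G : SimpleGraph V) {h : V} (H : G.Walk h h) (c : V) : Prop :=
  IsWheel G H c ∧ ∃ a b d : V,
    a ≠ b ∧ a ≠ d ∧ b ≠ d ∧
    HoleNbrs G H c = {a, b, d} ∧
    s(a, b) ∈ H.edges ∧ s(a, d) ∉ H.edges ∧ s(b, d) ∉ H.edges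

/-- `Z(W)` for a non-special wheel `W = (H, c)`. -/
def ZNonSpecial (G : SimpleGraph V) {h : V} (H : G.Walk h h) (c : V) : Set V :=
  {c} ∪ HoleNbrs G H c

/-- `Z(W)` for a special wheel `W = (H, c)` with length-one sector `ab` and third neighbor `d`. -/
def ZSpecial (G : SimpleGraph V) {h : V} (H : G.Walk h h) (c a b d : V) : Set V :=
  ({a, b, c, d} : Set V) ∪ {v | s(v, d) ∈ H.edges}

/-- A pyramid in `G` with apex `apx`, base `b 0, b 1, b 2` and paths `P i`. -/
def IsPyramid (G : SimpleGraph V) (apx : V) (b : Fin 3 → V)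
    (P : ∀ i, G.Walk apx (b i)) : Prop :=
  (∀ i, b i ≠ apx) ∧
  (∀ i j, i ≠ j → G.Adj (b i) (b j)) ∧
  (∀ i, (P i).IsPath) ∧ (∀ i, InducedWalk G (P i)) ∧
  (∀ i, 1 ≤ (P i).length) ∧
  (∀ i j, i ≠ j → ∀ x, x ∈ (P i).support → x ∈ (P j).support → x = apx) ∧
  (∀ i j, i ≠ j → ∀ x ∈ (P i).support, ∀ y ∈ (P j).support,
      x ≠ apx → y ≠ apx → G.Adj x y → x = b i ∧ y = b j) ∧
  (∀ i j, i ≠ j → 3 ≤ (P i).length + (P j).length)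

/-- `Z(Σ)` for a pyramid. -/
def ZPyramid (G : SimpleGraph V) (apx : V) (b : Fin 3 → V)
    (P : ∀ i, G.Walk apx (b i)) : Set V :=
  {apx} ∪ {v | (∃ i, v ∈ (P i).support) ∧ G.Adj apx v} ∪ Set.range b

/-- `x : Fin k → V` enumerates `X` in an order witnessing that `(P, X)` is an alignment. -/
def AlignmentOrder (G : SimpleGraph V) {p q : V} (P : G.Walk p q)
    (X : Finset V) {k : ℕ} (x : Fin k → V) : Prop :=
  Function.Injective x ∧ (∀ l, x l ∈ X) ∧ (∀ z ∈ X, ∃ l, x l = z) ∧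
  ∃ lo hi : Fin k → ℕ,
    (∀ l, lo l ≤ hi l) ∧
    (∀ l m : Fin k, l < m → hi l < lo m) ∧
    (∀ l, hi l < P.support.length) ∧
    ∀ (l : Fin k) (n : Fin P.support.length),
      G.Adj (x l) (P.support.get n) → lo l ≤ (n : ℕ) ∧ (n : ℕ) ≤ hi l

/-- `(P, X)` is an alignment. -/
def IsAlignment (G : SimpleGraph V) {p q : V} (P : G.Walk p q) (X : Finset V) : Prop :=
  (∀ z ∈ X, z ∉ P.support) ∧
  (∀ z ∈ X, ∃ u ∈ P.support, G.Adj z u) ∧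
  ∃ (k : ℕ) (x : Fin k → V), AlignmentOrder G P X x

/-- Every vertex of `X` has two non-adjacent neighbors in `P`. -/
def WideAl (G : SimpleGraph V) {p q : V} (P : G.Walk p q) (X : Finset V) : Prop :=
  ∀ z ∈ X, ∃ u v : V, u ∈ P.support ∧ v ∈ P.support ∧
    G.Adj z u ∧ G.Adj z v ∧ u ≠ v ∧ ¬ G.Adj u v

/-- Every vertex of `X` has a unique neighbor in `P`. -/
def SpikyAl (G : SimpleGraph V) {p q : V} (P : G.Walk p q) (X : Finset V) : Prop :=
  ∀ z ∈ X, ∃! u : V, u ∈ P.support ∧ G.Adj z u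

/-- Every vertex of `X` has exactly two neighbors in `P`, and they are adjacent. -/
def TriangularAl (G : SimpleGraph V) {p q : V} (P : G.Walk p q) (X : Finset V) : Prop :=
  ∀ z ∈ X, ∃ u v : V, u ∈ P.support ∧ v ∈ P.support ∧
    G.Adj z u ∧ G.Adj z v ∧ u ≠ v ∧ G.Adj u v ∧
    ∀ w ∈ P.support, G.Adj z w → w = u ∨ w = v

/-- `(P, X)` is a consistent alignment. -/
def ConsistentAlignment (G : SimpleGraph V) {p q : V} (P : G.Walk p q) (X : Finset V) : Prop :=
  IsAlignment G P X ∧ (WideAl G P X ∨ SpikyAl G P X ∨ TriangularAl G P X)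

/-- A branch vertex of a graph: a vertex of degree at least three. -/
def BranchVtx {W : Type} (T : SimpleGraph W) (v : W) : Prop :=
  3 ≤ (T.neighborSet v).ncard

/-- `T` is a caterpillar: a tree of maximum degree three, no two branch vertices adjacent,
and some path contains all branch vertices. -/
def IsCaterpillar {W : Type} (T : SimpleGraph W) : Prop :=
  T.IsTree ∧ (∀ v, (T.neighborSet v).ncard ≤ 3) ∧
  (∀ u v, BranchVtx T u → BranchVtx T v → ¬ T.Adj u v) ∧
  ∃ (x y : W) (P : T.Walk x y), P.IsPath ∧ ∀ v, BranchVtx T v → v ∈ P.support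

/-- `T` is a subdivided star with root `r`. -/
def IsSubdividedStar {W : Type} (T : SimpleGraph W) (r : W) : Prop :=
  T.IsTree ∧ 3 ≤ (T.neighborSet r).ncard ∧ ∀ v, v ≠ r → (T.neighborSet v).ncard ≤ 2

/-- `H` is isomorphic to the line graph of a caterpillar. -/
def IsLineCaterpillar {U : Type} (H : SimpleGraph U) : Prop :=
  ∃ (W : Type) (T : SimpleGraph W), IsCaterpillar T ∧ Nonempty (H ≃g T.lineGraph)

/-- `H` is isomorphic to the line graph of a subdivided star. -/
def IsLineSubdividedStar {U : Type} (H : SimpleGraph U) : Prop :=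
  ∃ (W : Type) (T : SimpleGraph W) (r : W),
    IsSubdividedStar T r ∧ Nonempty (H ≃g T.lineGraph)

/-- `v` is a simplicial vertex of `G[S]`. -/
def SimplicialIn (G : SimpleGraph V) (S : Set V) (v : V) : Prop :=
  v ∈ S ∧ ∀ u ∈ S, ∀ w ∈ S, G.Adj v u → G.Adj v w → u ≠ w → G.Adj u w

/-- `G[S]` is one of the four connectifier shapes. -/
def ConnType (G : SimpleGraph V) (S : Set V) : Prop :=
  IsCaterpillar (G.induce S) ∨ IsLineCaterpillar (G.induce S) ∨
  (∃ r, IsSubdividedStar (G.induce S) r) ∨ IsLineSubdividedStar (G.induce S)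

/-- `(G[S], X)` is a connectifier. -/
def IsConnectifier (G : SimpleGraph V) (S : Set V) (X : Finset V) : Prop :=
  (∀ z ∈ X, (z : V) ∉ S) ∧ (∀ z ∈ X, ∃ r ∈ S, G.Adj z r) ∧
  ( (∃ v, S = {v}) ∨
    ( ConnType G S ∧
      (∀ z ∈ X, ∀ r₁ ∈ S, ∀ r₂ ∈ S, G.Adj z r₁ → G.Adj z r₂ → r₁ = r₂) ∧
      (∀ z ∈ X, ∀ r ∈ S, G.Adj z r → SimplicialIn G S r) ∧
      (∀ v, SimplicialIn G S v → ∃ z ∈ X, G.Adj z v) ) )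

/-- The connectifier `(G[S], X)` is concentrated. -/
def Concentrated (G : SimpleGraph V) (S : Set V) : Prop :=
  (∃ v, S = {v}) ∨ (∃ r, IsSubdividedStar (G.induce S) r) ∨
  IsLineSubdividedStar (G.induce S)

/-- Reachability inside a vertex set `A`. -/
def Reaches (G : SimpleGraph V) (A : Set V) (u v : V) : Prop :=
  ∃ (w : G.Walk u v), ∀ z ∈ w.support, z ∈ A

/-- `Pw` is a spine of the caterpillar `G[S]`: a maximal path containing all branch vertices. -/
def IsSpineOf (G : SimpleGraph V) (S : Set V) {p q : V} (Pw : G.Walk p q) : Prop :=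
  Pw.IsPath ∧ (∀ w ∈ Pw.support, w ∈ S) ∧
  (∀ v ∈ S, 3 ≤ ({u | u ∈ S ∧ G.Adj v u}).ncard → v ∈ Pw.support) ∧
  ∀ (p' q' : V) (P' : G.Walk p' q'), P'.IsPath → (∀ w ∈ P'.support, w ∈ S) →
    (∀ w ∈ Pw.support, w ∈ P'.support) → ∀ w ∈ P'.support, w ∈ Pw.support

/-- `Pw` realizes `P(H)` for `H = G[S]`, when `H` is a caterpillar or the line graph
of a caterpillar. -/
def IsPHOf (G : SimpleGraph V) (S : Set V) {p q : V} (Pw : G.Walk p q) : Prop :=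
  Pw.IsPath ∧ (∀ w ∈ Pw.support, w ∈ S) ∧
  ( (IsCaterpillar (G.induce S) ∧ IsSpineOf G S Pw) ∨
    (∃ (W : Type) (T : SimpleGraph W) (φ : T.lineGraph ≃g G.induce S)
        (x y : W) (Q : T.Walk x y),
      IsCaterpillar T ∧ Q.IsPath ∧
      (∀ v, BranchVtx T v → v ∈ Q.support) ∧
      (∀ (x' y' : W) (Q' : T.Walk x' y'), Q'.IsPath →
        (∀ w ∈ Q.support, w ∈ Q'.support) → ∀ w ∈ Q'.support, w ∈ Q.support) ∧
      {w | w ∈ Pw.support} = {v : V | ∃ e : T.edgeSet, (e : Sym2 W) ∈ Q.edges ∧ ↑(φ e) = v}) )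

/-- `x` enumerates `X` in the order given by the (non-concentrated) connectifier `(G[S], X)`
with central path `Pw = P(H)`. -/
def ConnectifierOrder (G : SimpleGraph V) (S : Set V) (X : Finset V)
    {p q : V} (Pw : G.Walk p q) {k : ℕ} (x : Fin k → V) : Prop :=
  Function.Injective x ∧ (∀ l, x l ∈ X) ∧ (∀ z ∈ X, ∃ l, x l = z) ∧
  ∃ (s : Fin k → V) (lo hi : Fin k → ℕ),
    (∀ l, lo l ≤ hi l) ∧ (∀ l m : Fin k, l < m → hi l < lo m) ∧
    (∀ l, hi l < Pw.support.length) ∧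
    (∀ (l : Fin k) (n : Fin Pw.support.length),
      G.Adj (s l) (Pw.support.get n) → lo l ≤ (n : ℕ) ∧ (n : ℕ) ≤ hi l) ∧
    ∀ l : Fin k, s l ∈ S ∧ s l ∉ Pw.support ∧ (∃ u ∈ Pw.support, G.Adj (s l) u) ∧
      ∀ r ∈ S, G.Adj (x l) r → Reaches G (S \ {w | w ∈ Pw.support}) r (s l)

/-- `(G[S], X)` is a consistent alignment (with `G[S]` a path). -/
def ConsistentAlignmentSet (G : SimpleGraph V) (S : Set V) (X : Finset V) : Prop :=
  ∃ (p q : V) (Pw : G.Walk p q), Pw.IsPath ∧ InducedWalk G Pw ∧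
    {w | w ∈ Pw.support} = S ∧ ConsistentAlignment G Pw X

/-- The orders on `X` given by `(D1, X)` and by `(G[S], X)` coincide. -/
def OrdersAgree (G : SimpleGraph V) {p q : V} (D1w : G.Walk p q)
    (S : Set V) (X : Finset V) : Prop :=
  ∃ (k : ℕ) (x : Fin k → V),
    AlignmentOrder G D1w X x ∧
    ( (∃ (p' q' : V) (Pw : G.Walk p' q'), IsPHOf G S Pw ∧ ConnectifierOrder G S X Pw x) ∨
      (∃ (p' q' : V) (Pw : G.Walk p' q'), Pw.IsPath ∧ InducedWalk G Pw ∧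
        {w | w ∈ Pw.support} = S ∧ AlignmentOrder G Pw X x) )

/-- `(D1, Y, D2)` is an `s`-trisection of `G`, where `D1` is (the support of) the path `D1w`. -/
def IsTrisection (G : SimpleGraph V) (s : ℕ) {p q : V} (D1w : G.Walk p q)
    (Y D2 : Set V) : Prop :=
  D1w.IsPath ∧ InducedWalk G D1w ∧
  (∀ w ∈ D1w.support, w ∉ Y ∧ w ∉ D2) ∧ Disjoint Y D2 ∧
  ({w | w ∈ D1w.support} ∪ Y ∪ D2 = Set.univ) ∧
  D2.Nonempty ∧
  (∀ a ∈ D1w.support, ∀ b ∈ D2, ¬ G.Adj a b) ∧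
  StableSet G Y ∧ Y.ncard = s ∧
  OpenNbhd G {w | w ∈ D1w.support} = Y ∧ OpenNbhd G D2 = Y ∧
  (∀ y ∈ Y, ∃ d ∈ D1w.support, ∀ z ∈ Y, (G.Adj d z ↔ z = y))

/-- The conclusion of amiability for the trisection `(D1w, Y, D2)` with parameter `x`:
the pair `(G[S], X)` is "given by amiability". -/
def AmiableOutcome (G : SimpleGraph V) {p q : V} (D1w : G.Walk p q)
    (Y D2 : Set V) (x : ℕ) (S : Set V) (X : Finset V) : Prop :=
  S ⊆ D2 ∧ ↑X ⊆ Y ∧ X.card = x ∧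
  ConsistentAlignment G D1w X ∧
  (IsConnectifier G S X ∨ ConsistentAlignmentSet G S X) ∧
  (¬ (IsConnectifier G S X ∧ Concentrated G S) → OrdersAgree G D1w S X)


variable {G : SimpleGraph V}

/- ### Auxiliary lemmas -/

lemma walk_support_getElem_zero {v w : V} (q : G.Walk v w) (h : 0 < q.support.length) :
    q.support[0] = v := by
  rw [List.getElem_of_eq q.support_eq_cons h]; rfl

theorem walk_edge_of_consec {u v : V} (W : G.Walk u v) :
    ∀ (t : ℕ) (h : t + 1 < W.support.length),
      s(W.support[t]'(by omega), W.support[t+1]'h) ∈ W.edges := by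
  induction W with
  | nil => intro t h; simp at h
  | cons hadj q ih =>
    intro t h
    simp only [Walk.support_cons, List.length_cons] at h
    match t with
    | 0 =>
      simp only [Walk.support_cons, List.getElem_cons_zero, List.getElem_cons_succ,
        Walk.edges_cons]
      rw [walk_support_getElem_zero q (by omega)]
      exact List.mem_cons_self
    | Nat.succ t =>
      simp only [Walk.support_cons, List.getElem_cons_succ, Walk.edges_cons]
      right
      exact ih t (by omega)

theorem walk_consec_of_edge {u v : V} (W : G.Walk u v) :
    ∀ e ∈ W.edges, ∃ (t : ℕ) (h : t + 1 < W.support.length),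
      e = s(W.support[t]'(by omega), W.support[t+1]'h) := by
  induction W with
  | nil => simp
  | cons hadj q ih =>
    intro e he
    rw [Walk.edges_cons, List.mem_cons] at he
    have hlen : 0 < q.support.length := List.length_pos_iff.2 q.support_ne_nil
    rcases he with rfl | he
    · refine ⟨0, by simp only [Walk.support_cons, List.length_cons]; omega, ?_⟩
      simp only [Walk.support_cons, List.getElem_cons_zero, List.getElem_cons_succ]
      rw [walk_support_getElem_zero q hlen]
    · obtain ⟨t, h, rfl⟩ := ih e he
      refine ⟨t+1, by simp only [Walk.support_cons, List.length_cons]; omega, ?_⟩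
      simp [Walk.support_cons]

lemma chain'_adj_getElem {l : List V} (h : l.Chain' G.Adj) {i : ℕ} (hi : i + 1 < l.length) :
    G.Adj (l[i]'(by omega)) (l[i+1]'hi) := by
  replace h : List.IsChain G.Adj l := h
  rw [List.isChain_iff_getElem] at h
  simpa [List.get_eq_getElem] using h i (by omega)

theorem exists_seg {l : List V} (hc : l.Chain' G.Adj) :
    ∀ (k i j : ℕ) (hij : i + k = j) (hj : j < l.length),
      ∃ W : G.Walk (l[i]'(by omega)) (l[j]'hj), W.support = (l.drop i).take (j + 1 - i) := by
  intro k
  induction k with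
  | zero =>
    intro i j hij hj
    subst hij
    refine ⟨Walk.nil, ?_⟩
    simp only [Walk.support_nil]
    have h1 : i + 0 + 1 - i = 1 := by omega
    rw [h1, List.take_one]
    have hne : (l.drop i) ≠ [] := by
      simp only [ne_eq, List.drop_eq_nil_iff]; omega
    cases hd : l.drop i with
    | nil => exact absurd hd hne
    | cons a t =>
      have ha : l[i+0]'hj = a := by
        have h0 : (0:ℕ) < (l.drop i).length := by simp; omega
        have := List.getElem_drop (xs := l) (i := i) (j := 0) (h := h0)
        rw [List.getElem_of_eq hd h0] at this
        simpa using this.symm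
      simp [← ha]
  | succ k ih =>
    intro i j hij hj
    subst hij
    obtain ⟨W, hW⟩ := ih i (i+k) rfl (by omega)
    have hadj : G.Adj (l[i+k]'(by omega)) (l[i+(k+1)]'hj) := by
      have := chain'_adj_getElem (G := G) hc (i := i + k) (by omega : i + k + 1 < l.length)
      convert this using 2
      omega
    refine ⟨W.concat hadj, ?_⟩
    rw [Walk.support_concat, hW]
    have h2 : i + (k + 1) + 1 - i = (i + k + 1 - i) + 1 := by omega
    rw [h2, List.take_succ]
    congr 1
    have hlt2 : i + k + 1 - i < (l.drop i).length := by simp; omega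
    rw [List.getElem?_eq_getElem hlt2]
    rw [List.getElem_drop (xs := l) (h := hlt2)]
    have h3 : i + (i + k + 1 - i) = i + (k+1) := by omega
    simp only [h3]
    rfl

lemma two_le_walk_length {y y' : V} (R : G.Walk y y') (hne : y ≠ y') (hnadj : ¬ G.Adj y y') :
    2 ≤ R.length := by
  cases R with
  | nil => exact absurd rfl hne
  | cons h w =>
    cases w with
    | nil => exact absurd h hnadj
    | cons h2 w2 => simp only [Walk.length_cons]; omega

lemma adj_consec {p q : V} (P : G.Walk p q) (hnodup : P.support.Nodup)
    (hPind : InducedWalk G P) {i j : ℕ} (hi : i < P.support.length)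
    (hj : j < P.support.length) (hadj : G.Adj (P.support[i]'hi) (P.support[j]'hj)) :
    i + 1 = j ∨ j + 1 = i := by
  have hmem := hPind _ (List.getElem_mem hi) _ (List.getElem_mem hj) hadj
  obtain ⟨t, ht, he2⟩ := walk_consec_of_edge P _ hmem
  rw [Sym2.eq_iff] at he2
  rcases he2 with ⟨h1, h2⟩ | ⟨h1, h2⟩
  · left
    rw [hnodup.getElem_inj_iff] at h1 h2
    omega
  · right
    rw [hnodup.getElem_inj_iff] at h1 h2
    omega

/-- The set of vertices of `P` with index in `[a,c]`. -/
def SegSet {p q : V} (P : G.Walk p q) (a c : ℕ) : Set V :=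
  {w | ∃ k, a ≤ k ∧ k ≤ c ∧ ∃ h : k < P.support.length, w = P.support[k]'h}

set_option maxHeartbeats 1000000 in
lemma mkSeg {p q : V} (P : G.Walk p q) (hPpath : P.IsPath) (hPind : InducedWalk G P)
    {y y' : V} (hyP : y ∉ P.support) (hy'P : y' ∉ P.support) (hne : y ≠ y')
    (hnadj : ¬ G.Adj y y') (a c : ℕ) (hac : a ≤ c) (hc : c < P.support.length)
    (hya : G.Adj y (P.support[a]'(by omega)))
    (hy'c : G.Adj y' (P.support[c]'hc))
    (hyNone : ∀ k (h : k < P.support.length), a < k → k ≤ c → ¬ G.Adj y (P.support[k]'h))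
    (hy'None : ∀ k (h : k < P.support.length), a ≤ k → k < c → ¬ G.Adj y' (P.support[k]'h)) :
    ∃ Q : G.Walk y y', Q.IsPath ∧ InducedWalk G Q ∧ 2 ≤ Q.length ∧
      Interior Q = SegSet P a c := by
  classical
  have hnodup : P.support.Nodup := hPpath.support_nodup
  obtain ⟨W, hWsup⟩ := exists_seg (G := G) P.isChain_adj_support (c - a) a c (by omega) hc
  have hWlen : W.support.length = c + 1 - a := by
    rw [hWsup]
    simp only [List.length_take, List.length_drop]
    omega
  have hWget : ∀ (t : ℕ) (ht : t < W.support.length),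
      W.support[t]'ht = P.support[a + t]'(by rw [hWlen] at ht; omega) := by
    intro t ht
    have ht2 : t < (List.take (c + 1 - a) (List.drop a P.support)).length := by
      rw [← hWsup]; exact ht
    have e1 : W.support[t]'ht = (List.take (c + 1 - a) (List.drop a P.support))[t]'ht2 := by
      simp only [hWsup]
    rw [e1, List.getElem_take, List.getElem_drop]
  have hWmem : ∀ w, w ∈ W.support ↔
      ∃ k, a ≤ k ∧ k ≤ c ∧ ∃ h : k < P.support.length, w = P.support[k]'h := by
    intro w
    rw [List.mem_iff_getElem]
    constructor
    · rintro ⟨t, ht, rfl⟩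
      have ht' := ht
      rw [hWlen] at ht'
      exact ⟨a + t, by omega, by omega, by omega, hWget t ht⟩
    · rintro ⟨k, hak, hkc, hk, rfl⟩
      refine ⟨k - a, by rw [hWlen]; omega, ?_⟩
      rw [hWget (k - a) (by rw [hWlen]; omega)]
      have : a + (k - a) = k := by omega
      simp only [this]
  have hWsubP : ∀ w ∈ W.support, w ∈ P.support := by
    intro w hw
    rw [hWmem] at hw
    obtain ⟨k, _, _, hk, rfl⟩ := hw
    exact List.getElem_mem hk
  have hWnodup : W.support.Nodup := by
    rw [hWsup]
    exact hnodup.sublist ((List.take_sublist _ _).trans (List.drop_sublist _ _))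
  have hyW : y ∉ W.support := fun h => hyP (hWsubP _ h)
  have hy'W : y' ∉ W.support := fun h => hy'P (hWsubP _ h)
  refine ⟨(Walk.cons hya W).concat hy'c.symm, ?_, ?_, ?_, ?_⟩
  · -- IsPath
    rw [Walk.isPath_def, Walk.support_concat, Walk.support_cons]
    apply List.Nodup.append
    · exact List.nodup_cons.2 ⟨hyW, hWnodup⟩
    · simp
    · intro w hw hw'
      rw [List.mem_singleton] at hw'
      subst hw'
      rcases List.mem_cons.1 hw with h | h
      · exact hne h.symm
      · exact hy'W h
  · -- InducedWalk
    have hQsup : ((Walk.cons hya W).concat hy'c.symm).support = (y :: W.support) ++ [y'] := by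
      rw [Walk.support_concat, Walk.support_cons]
    have hQedges : ((Walk.cons hya W).concat hy'c.symm).edges
        = (s(y, P.support[a]'(by omega)) :: W.edges) ++ [s(P.support[c]'hc, y')] := by
      rw [Walk.edges_concat, Walk.edges_cons, List.concat_eq_append]
    intro x hx z hz hadj
    rw [hQsup] at hx hz
    rw [List.mem_append, List.mem_cons, List.mem_singleton] at hx hz
    rw [hQedges]
    rw [List.mem_append, List.mem_cons, List.mem_singleton]
    rcases hx with (rfl | hxW) | rfl
    · -- x = y
      rcases hz with (rfl | hzW) | rfl
      · exact absurd rfl hadj.ne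
      · rw [hWmem] at hzW
        obtain ⟨k, hak, hkc, hk, rfl⟩ := hzW
        rcases Nat.eq_or_lt_of_le hak with rfl | hlt
        · exact Or.inl (Or.inl rfl)
        · exact absurd hadj (hyNone k hk hlt hkc)
      · exact absurd hadj hnadj
    · -- x ∈ W
      have hxW' := hxW
      rw [hWmem] at hxW'
      obtain ⟨k, hak, hkc, hk, rfl⟩ := hxW'
      rcases hz with (rfl | hzW) | rfl
      · rcases Nat.eq_or_lt_of_le hak with rfl | hlt
        · exact Or.inl (Or.inl Sym2.eq_swap)
        · exact absurd hadj.symm (hyNone k hk hlt hkc)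
      · rw [hWmem] at hzW
        obtain ⟨k', hak', hkc', hk', rfl⟩ := hzW
        have hcons := adj_consec P hnodup hPind hk hk' hadj
        left; right
        rcases hcons with h1 | h1
        · have h2 : k + 1 < P.support.length := by omega
          have hmem := walk_edge_of_consec W (k - a) (by rw [hWlen]; omega)
          rw [hWget (k-a) (by rw [hWlen]; omega),
              hWget (k-a+1) (by rw [hWlen]; omega)] at hmem
          have e1 : a + (k - a) = k := by omega
          have e2 : a + (k - a + 1) = k + 1 := by omega
          simp only [e1, e2] at hmem
          have e3 : k' = k + 1 := by omega
          subst e3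
          exact hmem
        · have h2 : k' + 1 < P.support.length := by omega
          have hmem := walk_edge_of_consec W (k' - a) (by rw [hWlen]; omega)
          rw [hWget (k'-a) (by rw [hWlen]; omega),
              hWget (k'-a+1) (by rw [hWlen]; omega)] at hmem
          have e1 : a + (k' - a) = k' := by omega
          have e2 : a + (k' - a + 1) = k' + 1 := by omega
          simp only [e1, e2] at hmem
          have e3 : k = k' + 1 := by omega
          subst e3
          exact Sym2.eq_swap ▸ hmem
      · rcases Nat.eq_or_lt_of_le hkc with rfl | hlt
        · exact Or.inr rfl
        · exact absurd hadj.symm (hy'None k hk hak hlt)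
    · -- x = y'
      rcases hz with (rfl | hzW) | rfl
      · exact absurd hadj.symm hnadj
      · rw [hWmem] at hzW
        obtain ⟨k, hak, hkc, hk, rfl⟩ := hzW
        rcases Nat.eq_or_lt_of_le hkc with rfl | hlt
        · exact Or.inr Sym2.eq_swap
        · exact absurd hadj (hy'None k hk hak hlt)
      · exact absurd rfl hadj.ne
  · -- length
    rw [Walk.length_concat, Walk.length_cons]
    omega
  · -- interior
    ext w
    simp only [Interior, Set.mem_setOf_eq, SegSet]
    rw [Walk.support_concat, Walk.support_cons]
    rw [List.mem_append, List.mem_cons, List.mem_singleton]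
    constructor
    · rintro ⟨hmem, hwy, hwy'⟩
      rcases hmem with (rfl | hW) | rfl
      · exact absurd rfl hwy
      · rw [hWmem] at hW; exact hW
      · exact absurd rfl hwy'
    · intro hseg
      have hW : w ∈ W.support := (hWmem w).2 hseg
      refine ⟨Or.inl (Or.inr hW), ?_, ?_⟩
      · rintro rfl; exact hyW hW
      · rintro rfl; exact hy'W hW

lemma inducedWalk_reverse {u v : V} (Q : G.Walk u v) (h : InducedWalk G Q) :
    InducedWalk G Q.reverse := by
  intro x hx z hz hadj
  rw [Walk.support_reverse, List.mem_reverse] at hx hz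
  rw [Walk.edges_reverse, List.mem_reverse]
  exact h x hx z hz hadj

lemma interior_reverse {u v : V} (Q : G.Walk u v) : Interior Q.reverse = Interior Q := by
  ext w
  simp only [Interior, Set.mem_setOf_eq, Walk.support_reverse, List.mem_reverse]
  tauto

lemma segSet_subset_support {p q : V} (P : G.Walk p q) (a c : ℕ) :
    ∀ w ∈ SegSet P a c, w ∈ P.support := by
  rintro w ⟨k, _, _, hk, rfl⟩
  exact List.getElem_mem hk

lemma theta_core (hth : ¬ ContainsTheta G)
    {p q : V} (P : G.Walk p q) (hPpath : P.IsPath) (hPind : InducedWalk G P)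
    {y y' : V} (hne : y ≠ y') (hnadj : ¬ G.Adj y y')
    (R : G.Walk y y') (hRpath : R.IsPath) (hRind : InducedWalk G R)
    (hRdisj : ∀ w ∈ Interior R, w ∉ P.support)
    (hRanti : ∀ w ∈ Interior R, ∀ u ∈ P.support, ¬ G.Adj w u)
    (a c e f : ℕ) (hce : c + 2 ≤ e)
    (Q2 Q3 : G.Walk y y')
    (h2p : Q2.IsPath) (h2i : InducedWalk G Q2) (h2l : 2 ≤ Q2.length)
    (h2int : Interior Q2 = SegSet P a c)
    (h3p : Q3.IsPath) (h3i : InducedWalk G Q3) (h3l : 2 ≤ Q3.length)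
    (h3int : Interior Q3 = SegSet P e f) :
    False := by
  have hnodup : P.support.Nodup := hPpath.support_nodup
  apply hth
  refine ⟨y, y', Q2, Q3, R, hne, hnadj, h2p, h3p, hRpath, h2i, h3i, hRind,
    h2l, h3l, two_le_walk_length R hne hnadj, ?_, ?_, ?_, ?_, ?_, ?_⟩
  · -- Disjoint Int Q2 Int Q3
    rw [h2int, h3int, Set.disjoint_left]
    rintro w ⟨k, hak, hkc, hk, rfl⟩ ⟨k', hek', hk'f, hk', hww⟩
    have := (hnodup.getElem_inj_iff).1 hww
    omega
  · -- Disjoint Int Q2 Int R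
    rw [h2int, Set.disjoint_left]
    intro w hw hwR
    exact hRdisj w hwR (segSet_subset_support P a c w hw)
  · rw [h3int, Set.disjoint_left]
    intro w hw hwR
    exact hRdisj w hwR (segSet_subset_support P e f w hw)
  · -- Anticomplete Int Q2 Int Q3
    rw [h2int, h3int]
    rintro w ⟨k, hak, hkc, hk, rfl⟩ w' ⟨k', hek', hk'f, hk', rfl⟩ hadj
    have := adj_consec P hnodup hPind hk hk' hadj
    omega
  · rw [h2int]
    intro w hw w' hw' hadj
    exact hRanti w' hw' w (segSet_subset_support P a c w hw) hadj.symm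
  · rw [h3int]
    intro w hw w' hw' hadj
    exact hRanti w' hw' w (segSet_subset_support P e f w hw) hadj.symm

lemma no_config_cross (hth : ¬ ContainsTheta G)
    {p q : V} (P : G.Walk p q) (hPpath : P.IsPath) (hPind : InducedWalk G P)
    {y y' : V} (hyP : y ∉ P.support) (hy'P : y' ∉ P.support) (hne : y ≠ y')
    (hnadj : ¬ G.Adj y y')
    (R : G.Walk y y') (hRpath : R.IsPath) (hRind : InducedWalk G R)
    (hRdisj : ∀ w ∈ Interior R, w ∉ P.support)
    (hRanti : ∀ w ∈ Interior R, ∀ u ∈ P.support, ¬ G.Adj w u)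
    (a c e f : ℕ) (hac : a ≤ c) (hce : c + 2 ≤ e) (hef : e ≤ f)
    (hf : f < P.support.length)
    (hya : G.Adj y (P.support[a]'(by omega)))
    (hy'c : G.Adj y' (P.support[c]'(by omega)))
    (hyN1 : ∀ k (h : k < P.support.length), a < k → k ≤ c → ¬ G.Adj y (P.support[k]'h))
    (hy'N1 : ∀ k (h : k < P.support.length), a ≤ k → k < c → ¬ G.Adj y' (P.support[k]'h))
    (hye : G.Adj y (P.support[e]'(by omega)))
    (hy'f : G.Adj y' (P.support[f]'hf))
    (hyN2 : ∀ k (h : k < P.support.length), e < k → k ≤ f → ¬ G.Adj y (P.support[k]'h))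
    (hy'N2 : ∀ k (h : k < P.support.length), e ≤ k → k < f → ¬ G.Adj y' (P.support[k]'h)) :
    False := by
  obtain ⟨Q2, h2p, h2i, h2l, h2int⟩ :=
    mkSeg P hPpath hPind hyP hy'P hne hnadj a c hac (by omega) hya hy'c hyN1 hy'N1
  obtain ⟨Q3, h3p, h3i, h3l, h3int⟩ :=
    mkSeg P hPpath hPind hyP hy'P hne hnadj e f hef hf hye hy'f hyN2 hy'N2
  exact theta_core hth P hPpath hPind hne hnadj R hRpath hRind hRdisj hRanti a c e f hce
    Q2 Q3 h2p h2i h2l h2int h3p h3i h3l h3int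

lemma no_config_nest (hth : ¬ ContainsTheta G)
    {p q : V} (P : G.Walk p q) (hPpath : P.IsPath) (hPind : InducedWalk G P)
    {y y' : V} (hyP : y ∉ P.support) (hy'P : y' ∉ P.support) (hne : y ≠ y')
    (hnadj : ¬ G.Adj y y')
    (R : G.Walk y y') (hRpath : R.IsPath) (hRind : InducedWalk G R)
    (hRdisj : ∀ w ∈ Interior R, w ∉ P.support)
    (hRanti : ∀ w ∈ Interior R, ∀ u ∈ P.support, ¬ G.Adj w u)
    (a c e f : ℕ) (hac : a ≤ c) (hce : c + 2 ≤ e) (hef : e ≤ f)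
    (hf : f < P.support.length)
    (hya : G.Adj y (P.support[a]'(by omega)))
    (hy'c : G.Adj y' (P.support[c]'(by omega)))
    (hyN1 : ∀ k (h : k < P.support.length), a < k → k ≤ c → ¬ G.Adj y (P.support[k]'h))
    (hy'N1 : ∀ k (h : k < P.support.length), a ≤ k → k < c → ¬ G.Adj y' (P.support[k]'h))
    (hy'e : G.Adj y' (P.support[e]'(by omega)))
    (hyf : G.Adj y (P.support[f]'hf))
    (hy'N2 : ∀ k (h : k < P.support.length), e < k → k ≤ f → ¬ G.Adj y' (P.support[k]'h))
    (hyN2 : ∀ k (h : k < P.support.length), e ≤ k → k < f → ¬ G.Adj y (P.support[k]'h)) :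
    False := by
  obtain ⟨Q2, h2p, h2i, h2l, h2int⟩ :=
    mkSeg P hPpath hPind hyP hy'P hne hnadj a c hac (by omega) hya hy'c hyN1 hy'N1
  obtain ⟨Q3', h3p, h3i, h3l, h3int⟩ :=
    mkSeg P hPpath hPind hy'P hyP hne.symm (fun h => hnadj h.symm) e f hef hf hy'e hyf
      hy'N2 hyN2
  refine theta_core hth P hPpath hPind hne hnadj R hRpath hRind hRdisj hRanti a c e f hce
    Q2 Q3'.reverse h2p h2i h2l h2int (h3p.reverse) (inducedWalk_reverse Q3' h3i) ?_ ?_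
  · rw [Walk.length_reverse]; exact h3l
  · rw [interior_reverse]; exact h3int

lemma greedy {α : Type} [DecidableEq α] (mm MM : α → ℕ) (B : ℕ) :
    ∀ (s : ℕ) (C : Finset α),
      (∀ y ∈ C, mm y ≤ MM y) →
      (∀ y0 ∈ C, (C.filter (fun y => mm y ≤ MM y0 ∧ MM y0 ≤ MM y)).card ≤ B) →
      (s * (B + 1) ≤ C.card + B) →
      ∃ x : Fin s → α, (∀ l, x l ∈ C) ∧ ∀ l l', l < l' → MM (x l) < mm (x l') := by
  intro s
  induction s with
  | zero =>
    intro C _ _ _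
    exact ⟨Fin.elim0, fun l => l.elim0, fun l => l.elim0⟩
  | succ s ih =>
    intro C hle hB hcard
    have hCne : C.Nonempty := by
      rw [← Finset.card_pos]
      have h2 : (s+1)*(B+1) = s*(B+1) + (B+1) := by ring
      omega
    obtain ⟨y0, hy0C, hy0min⟩ := Finset.exists_min_image C MM hCne
    set bad := C.filter (fun y => mm y ≤ MM y0 ∧ MM y0 ≤ MM y) with hbaddef
    have hy0bad : y0 ∈ bad := by
      rw [hbaddef, Finset.mem_filter]
      exact ⟨hy0C, hle y0 hy0C, le_refl _⟩
    have hbadcard : bad.card ≤ B := hB y0 hy0C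
    have hbadsub : bad ⊆ C := Finset.filter_subset _ _
    set C' := C \ bad with hC'def
    have hC'sub : C' ⊆ C := Finset.sdiff_subset
    have hC'card : C.card - bad.card = C'.card := (Finset.card_sdiff_of_subset hbadsub).symm
    obtain ⟨x', hx'C, hx'ord⟩ := ih C' (fun y hy => hle y (hC'sub hy))
      (fun z hz => le_trans (Finset.card_le_card
        (Finset.filter_subset_filter _ hC'sub)) (hB z (hC'sub hz)))
      (by
        have h1 : 0 < bad.card := Finset.card_pos.2 ⟨y0, hy0bad⟩
        have h2 : (s+1)*(B+1) = s*(B+1) + (B+1) := by ring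
        have h3 : C'.card + bad.card = C.card := Finset.card_sdiff_add_card_eq_card hbadsub
        omega)
    have hkey : ∀ z ∈ C', MM y0 < mm z := by
      intro z hz
      rw [hC'def, Finset.mem_sdiff] at hz
      obtain ⟨hzC, hzbad⟩ := hz
      rw [hbaddef, Finset.mem_filter] at hzbad
      push_neg at hzbad
      have h1 := hzbad hzC
      by_contra hcon
      push_neg at hcon
      exact absurd (hy0min z hzC) (by omega)
    refine ⟨Fin.cases y0 x', ?_, ?_⟩
    · intro l
      refine Fin.cases ?_ ?_ l
      · simpa using hy0C
      · intro j
        simpa using hC'sub (hx'C j)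
    · intro l l' hlt
      rcases Fin.eq_zero_or_eq_succ l' with rfl | ⟨j', rfl⟩
      · exact absurd hlt (Fin.not_lt_zero _)
      · rcases Fin.eq_zero_or_eq_succ l with rfl | ⟨j, rfl⟩
        · simpa using hkey (x' j') (hx'C j')
        · have hjj : j < j' := by
            rwa [Fin.succ_lt_succ_iff] at hlt
          simpa using hx'ord j j' hjj


set_option maxHeartbeats 2000000 in
/-- extracting a consistent alignment (Lemma 6.2). -/
theorem statement_8 (d s : ℕ) (hd : 0 < d) (hs : 0 < s)
    {V : Type} [Fintype V] (G : SimpleGraph V)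
    (hth : ¬ ContainsTheta G)
    (Y : Finset V) (hstab : StableSet G ↑Y) (hcard : Y.card = 3 * s * (d + 1))
    {p q : V} (P : G.Walk p q) (hPpath : P.IsPath) (hPind : InducedWalk G P)
    (hdisj : ∀ y ∈ Y, y ∉ P.support)
    (hnbr : ∀ y ∈ Y, ∃ u ∈ P.support, G.Adj y u)
    (hdeg : ∀ u ∈ P.support, ({y : V | y ∈ Y ∧ G.Adj u y}).ncard < d)
    (hconn : ∀ y ∈ Y, ∀ y' ∈ Y, y ≠ y' →
      ∃ (R : G.Walk y y'), R.IsPath ∧ InducedWalk G R ∧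
        (∀ w ∈ Interior R, w ∉ P.support) ∧
        (∀ w ∈ Interior R, ∀ u ∈ P.support, ¬ G.Adj w u)) :
    ∃ S : Finset V, S ⊆ Y ∧ S.card = s ∧ ConsistentAlignment G P S := by
  classical
  have hnodup : P.support.Nodup := hPpath.support_nodup
  have hn : 0 < P.support.length := List.length_pos_iff.2 P.support_ne_nil
  -- neighbour indices
  obtain ⟨Nb, hNbmem⟩ : ∃ Nb : V → Finset (Fin P.support.length),
      ∀ y i, i ∈ Nb y ↔ G.Adj y (P.support.get i) :=
    ⟨fun y => Finset.univ.filter (fun i => G.Adj y (P.support.get i)), by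
      intro y i; simp⟩
  have hNbne : ∀ y ∈ Y, (Nb y).Nonempty := by
    intro y hy
    obtain ⟨u, hu, hadj⟩ := hnbr y hy
    rw [List.mem_iff_get] at hu
    obtain ⟨i, rfl⟩ := hu
    exact ⟨i, (hNbmem y i).2 hadj⟩
  obtain ⟨mfn, Mfn, hspec⟩ : ∃ (mfn Mfn : V → Fin P.support.length),
      ∀ y, y ∈ Y → (mfn y ∈ Nb y ∧ Mfn y ∈ Nb y ∧
        ∀ i ∈ Nb y, mfn y ≤ i ∧ i ≤ Mfn y) := by
    refine ⟨fun y => if h : (Nb y).Nonempty then (Nb y).min' h else ⟨0, hn⟩,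
      fun y => if h : (Nb y).Nonempty then (Nb y).max' h else ⟨0, hn⟩, ?_⟩
    intro y hy
    have hne := hNbne y hy
    simp only [dif_pos hne]
    exact ⟨Finset.min'_mem _ _, Finset.max'_mem _ _,
      fun i hi => ⟨Finset.min'_le _ _ hi, Finset.le_max' _ _ hi⟩⟩
  have hmM : ∀ y ∈ Y, (mfn y).val ≤ (Mfn y).val := by
    intro y hy
    obtain ⟨h1, h2, h3⟩ := hspec y hy
    exact (h3 _ h2).1
  have hAdjm : ∀ y ∈ Y, G.Adj y (P.support.get (mfn y)) := by
    intro y hy; exact (hNbmem _ _).1 (hspec y hy).1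
  have hAdjM : ∀ y ∈ Y, G.Adj y (P.support.get (Mfn y)) := by
    intro y hy; exact (hNbmem _ _).1 (hspec y hy).2.1
  have hnadj : ∀ y ∈ Y, ∀ y' ∈ Y, y ≠ y' → ¬ G.Adj y y' := by
    intro y hy y' hy' hne
    exact hstab y hy y' hy' hne
  have hgetE : ∀ (i : Fin P.support.length), P.support.get i = P.support[i.val]'i.isLt := by
    intro i; simp [List.get_eq_getElem]
  -- adjacency at a ℕ index k implies membership in Nb
  have hNbk : ∀ y (k : ℕ) (h : k < P.support.length), G.Adj y (P.support[k]'h) →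
      (⟨k, h⟩ : Fin P.support.length) ∈ Nb y := by
    intro y k h hadj
    rw [hNbmem, hgetE]
    exact hadj
  -- LT1 : no nesting with wide inner vertex
  have LT1 : ∀ y ∈ Y, ∀ y' ∈ Y, y ≠ y' → (mfn y).val ≤ (mfn y').val →
      (Mfn y').val ≤ (Mfn y).val → (mfn y').val + 2 ≤ (Mfn y').val → False := by
    intro y hy y' hy' hne h1 h2 h3
    obtain ⟨R, hRp, hRi, hRd, hRa⟩ := hconn y hy y' hy' hne
    have hF1ne : ((Nb y).filter (fun i => i.val ≤ (mfn y').val)).Nonempty :=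
      ⟨mfn y, Finset.mem_filter.2 ⟨(hspec y hy).1, h1⟩⟩
    set A := ((Nb y).filter (fun i => i.val ≤ (mfn y').val)).max' hF1ne with hAdef
    have hA1 : A ∈ Nb y := (Finset.mem_filter.1 (Finset.max'_mem _ hF1ne)).1
    have hA2 : A.val ≤ (mfn y').val := (Finset.mem_filter.1 (Finset.max'_mem _ hF1ne)).2
    have hAmax : ∀ i ∈ Nb y, i.val ≤ (mfn y').val → i ≤ A := by
      intro i hi hile
      exact Finset.le_max' _ i (Finset.mem_filter.2 ⟨hi, hile⟩)
    have hF2ne : ((Nb y).filter (fun i => (Mfn y').val ≤ i.val)).Nonempty :=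
      ⟨Mfn y, Finset.mem_filter.2 ⟨(hspec y hy).2.1, h2⟩⟩
    set Bf := ((Nb y).filter (fun i => (Mfn y').val ≤ i.val)).min' hF2ne with hBdef
    have hB1 : Bf ∈ Nb y := (Finset.mem_filter.1 (Finset.min'_mem _ hF2ne)).1
    have hB2 : (Mfn y').val ≤ Bf.val := (Finset.mem_filter.1 (Finset.min'_mem _ hF2ne)).2
    have hBmin : ∀ i ∈ Nb y, (Mfn y').val ≤ i.val → Bf ≤ i := by
      intro i hi hile
      exact Finset.min'_le _ i (Finset.mem_filter.2 ⟨hi, hile⟩)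
    refine no_config_nest hth P hPpath hPind (hdisj y hy) (hdisj y' hy') hne
      (hnadj y hy y' hy' hne) R hRp hRi hRd hRa
      A.val (mfn y').val (Mfn y').val Bf.val hA2 h3 hB2 Bf.isLt ?_ ?_ ?_ ?_ ?_ ?_ ?_ ?_
    · rw [← hgetE]; exact (hNbmem _ _).1 hA1
    · rw [← hgetE]; exact hAdjm y' hy'
    · intro k h hk1 hk2 hadj
      have h' : k ≤ A.val := hAmax ⟨k, h⟩ (hNbk y k h hadj) hk2
      omega
    · intro k h hk1 hk2 hadj
      have h' : (mfn y').val ≤ k := ((hspec y' hy').2.2 ⟨k, h⟩ (hNbk y' k h hadj)).1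
      omega
    · rw [← hgetE]; exact hAdjM y' hy'
    · rw [← hgetE]; exact (hNbmem _ _).1 hB1
    · intro k h hk1 hk2 hadj
      have h' : k ≤ (Mfn y').val := ((hspec y' hy').2.2 ⟨k, h⟩ (hNbk y' k h hadj)).2
      omega
    · intro k h hk1 hk2 hadj
      have h' : Bf.val ≤ k := hBmin ⟨k, h⟩ (hNbk y k h hadj) hk1
      omega
  -- LT2 : no crossing with a gap of at least two
  have LT2 : ∀ y ∈ Y, ∀ y' ∈ Y, y ≠ y' → (mfn y).val ≤ (mfn y').val →
      (mfn y').val + 2 ≤ (Mfn y).val → (Mfn y).val ≤ (Mfn y').val → False := by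
    intro y hy y' hy' hne h1 h2 h3
    obtain ⟨R, hRp, hRi, hRd, hRa⟩ := hconn y hy y' hy' hne
    have hF1ne : ((Nb y).filter (fun i => i.val ≤ (mfn y').val)).Nonempty :=
      ⟨mfn y, Finset.mem_filter.2 ⟨(hspec y hy).1, h1⟩⟩
    set A := ((Nb y).filter (fun i => i.val ≤ (mfn y').val)).max' hF1ne with hAdef
    have hA1 : A ∈ Nb y := (Finset.mem_filter.1 (Finset.max'_mem _ hF1ne)).1
    have hA2 : A.val ≤ (mfn y').val := (Finset.mem_filter.1 (Finset.max'_mem _ hF1ne)).2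
    have hAmax : ∀ i ∈ Nb y, i.val ≤ (mfn y').val → i ≤ A := by
      intro i hi hile
      exact Finset.le_max' _ i (Finset.mem_filter.2 ⟨hi, hile⟩)
    have hF2ne : ((Nb y').filter (fun i => (Mfn y).val ≤ i.val)).Nonempty :=
      ⟨Mfn y', Finset.mem_filter.2 ⟨(hspec y' hy').2.1, h3⟩⟩
    set Bf := ((Nb y').filter (fun i => (Mfn y).val ≤ i.val)).min' hF2ne with hBdef
    have hB1 : Bf ∈ Nb y' := (Finset.mem_filter.1 (Finset.min'_mem _ hF2ne)).1
    have hB2 : (Mfn y).val ≤ Bf.val := (Finset.mem_filter.1 (Finset.min'_mem _ hF2ne)).2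
    have hBmin : ∀ i ∈ Nb y', (Mfn y).val ≤ i.val → Bf ≤ i := by
      intro i hi hile
      exact Finset.min'_le _ i (Finset.mem_filter.2 ⟨hi, hile⟩)
    refine no_config_cross hth P hPpath hPind (hdisj y hy) (hdisj y' hy') hne
      (hnadj y hy y' hy' hne) R hRp hRi hRd hRa
      A.val (mfn y').val (Mfn y).val Bf.val hA2 h2 hB2 Bf.isLt ?_ ?_ ?_ ?_ ?_ ?_ ?_ ?_
    · rw [← hgetE]; exact (hNbmem _ _).1 hA1
    · rw [← hgetE]; exact hAdjm y' hy'
    · intro k h hk1 hk2 hadj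
      have h' : k ≤ A.val := hAmax ⟨k, h⟩ (hNbk y k h hadj) hk2
      omega
    · intro k h hk1 hk2 hadj
      have h' : (mfn y').val ≤ k := ((hspec y' hy').2.2 ⟨k, h⟩ (hNbk y' k h hadj)).1
      omega
    · rw [← hgetE]; exact hAdjM y hy
    · rw [← hgetE]; exact (hNbmem _ _).1 hB1
    · intro k h hk1 hk2 hadj
      have h' : k ≤ (Mfn y).val := ((hspec y hy).2.2 ⟨k, h⟩ (hNbk y k h hadj)).2
      omega
    · intro k h hk1 hk2 hadj
      have h' : Bf.val ≤ k := hBmin ⟨k, h⟩ (hNbk y' k h hadj) hk1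
      omega

  have hgetMem : ∀ (i : Fin P.support.length), P.support.get i ∈ P.support := by
    intro i
    rw [hgetE]
    exact List.getElem_mem i.isLt
  -- pointwise consistency facts
  have hWidePt : ∀ z ∈ Y, (mfn z).val + 2 ≤ (Mfn z).val →
      ∃ u v : V, u ∈ P.support ∧ v ∈ P.support ∧ G.Adj z u ∧ G.Adj z v ∧
        u ≠ v ∧ ¬ G.Adj u v := by
    intro z hz hw
    refine ⟨P.support.get (mfn z), P.support.get (Mfn z), hgetMem _, hgetMem _,
      hAdjm z hz, hAdjM z hz, ?_, ?_⟩
    · intro he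
      rw [hgetE, hgetE] at he
      have := (hnodup.getElem_inj_iff).1 he
      omega
    · intro hadj
      rw [hgetE, hgetE] at hadj
      have := adj_consec P hnodup hPind _ _ hadj
      omega
  have hSpikyPt : ∀ z ∈ Y, (Mfn z).val = (mfn z).val →
      ∃! u : V, u ∈ P.support ∧ G.Adj z u := by
    intro z hz hsp
    refine ⟨P.support.get (mfn z), ⟨hgetMem _, hAdjm z hz⟩, ?_⟩
    rintro w ⟨hw, hadj⟩
    rw [List.mem_iff_get] at hw
    obtain ⟨i, rfl⟩ := hw
    have hi : i ∈ Nb z := (hNbmem z i).2 hadj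
    have h1 : (mfn z).val ≤ i.val := ((hspec z hz).2.2 i hi).1
    have h2 : i.val ≤ (Mfn z).val := ((hspec z hz).2.2 i hi).2
    congr 1
    exact Fin.ext (by omega)
  have hTriPt : ∀ z ∈ Y, (Mfn z).val = (mfn z).val + 1 →
      ∃ u v : V, u ∈ P.support ∧ v ∈ P.support ∧ G.Adj z u ∧ G.Adj z v ∧ u ≠ v ∧
        G.Adj u v ∧ ∀ w ∈ P.support, G.Adj z w → w = u ∨ w = v := by
    intro z hz htr
    have hadjuv : G.Adj (P.support.get (mfn z)) (P.support.get (Mfn z)) := by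
      rw [hgetE, hgetE]
      have hlt : (mfn z).val + 1 < P.support.length := by
        have := (Mfn z).isLt; omega
      have := chain'_adj_getElem (G := G) P.isChain_adj_support hlt
      simp only [htr]
      exact this
    refine ⟨P.support.get (mfn z), P.support.get (Mfn z), hgetMem _, hgetMem _,
      hAdjm z hz, hAdjM z hz, hadjuv.ne, hadjuv, ?_⟩
    intro w hw hadj
    rw [List.mem_iff_get] at hw
    obtain ⟨i, rfl⟩ := hw
    have hi : i ∈ Nb z := (hNbmem z i).2 hadj
    have h1 : (mfn z).val ≤ i.val := ((hspec z hz).2.2 i hi).1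
    have h2 : i.val ≤ (Mfn z).val := ((hspec z hz).2.2 i hi).2
    rcases Nat.eq_or_lt_of_le h1 with heq | hlt
    · left; congr 1; exact Fin.ext heq.symm
    · right; congr 1; exact Fin.ext (by omega)
  -- the three classes
  set Y0 := Y.filter (fun y => (Mfn y).val = (mfn y).val) with hY0def
  set Y1 := Y.filter (fun y => (Mfn y).val = (mfn y).val + 1) with hY1def
  set Y2 := Y.filter (fun y => (mfn y).val + 2 ≤ (Mfn y).val) with hY2def
  have hY0sub : Y0 ⊆ Y := Finset.filter_subset _ _
  have hY1sub : Y1 ⊆ Y := Finset.filter_subset _ _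
  have hY2sub : Y2 ⊆ Y := Finset.filter_subset _ _
  have hcover : Y ⊆ (Y0 ∪ Y1) ∪ Y2 := by
    intro y hy
    have h1 := hmM y hy
    rw [Finset.mem_union, Finset.mem_union, hY0def, hY1def, hY2def,
      Finset.mem_filter, Finset.mem_filter, Finset.mem_filter]
    by_cases hA : (Mfn y).val = (mfn y).val
    · exact Or.inl (Or.inl ⟨hy, hA⟩)
    by_cases hB : (Mfn y).val = (mfn y).val + 1
    · exact Or.inl (Or.inr ⟨hy, hB⟩)
    · exact Or.inr ⟨hy, by omega⟩
  have hsum : Y.card ≤ Y0.card + Y1.card + Y2.card := by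
    calc Y.card ≤ ((Y0 ∪ Y1) ∪ Y2).card := Finset.card_le_card hcover
      _ ≤ (Y0 ∪ Y1).card + Y2.card := Finset.card_union_le _ _
      _ ≤ Y0.card + Y1.card + Y2.card := by
          have := Finset.card_union_le Y0 Y1; omega
  -- degree bound in Finset form
  have hdegF : ∀ (i : Fin P.support.length),
      (Y.filter (fun y => G.Adj y (P.support.get i))).card ≤ d - 1 := by
    intro i
    have h1 := hdeg (P.support.get i) (hgetMem i)
    have h2 : {y : V | y ∈ Y ∧ G.Adj (P.support.get i) y}
        = ↑(Y.filter (fun y => G.Adj y (P.support.get i))) := by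
      ext z
      simp only [Set.mem_setOf_eq, Finset.coe_filter]
      exact ⟨fun ⟨a, b⟩ => ⟨a, b.symm⟩, fun ⟨a, b⟩ => ⟨a, b.symm⟩⟩
    rw [h2, Set.ncard_coe_finset] at h1
    omega
  -- conflict bounds for the three classes
  have hB0 : ∀ y0 ∈ Y0, (Y0.filter (fun y =>
      (mfn y).val ≤ (Mfn y0).val ∧ (Mfn y0).val ≤ (Mfn y).val)).card ≤ d - 1 := by
    intro y0 hy0
    refine le_trans (Finset.card_le_card ?_) (hdegF (Mfn y0))
    intro y hy
    rw [Finset.mem_filter] at hy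
    obtain ⟨hyY0, hle1, hle2⟩ := hy
    rw [hY0def, Finset.mem_filter] at hyY0
    obtain ⟨hyY, hcls⟩ := hyY0
    have heq : Mfn y0 = mfn y := Fin.ext (by omega)
    rw [Finset.mem_filter]
    refine ⟨hyY, ?_⟩
    rw [heq]
    exact hAdjm y hyY
  have hB1 : ∀ y0 ∈ Y1, (Y1.filter (fun y =>
      (mfn y).val ≤ (Mfn y0).val ∧ (Mfn y0).val ≤ (Mfn y).val)).card ≤ d - 1 := by
    intro y0 hy0
    refine le_trans (Finset.card_le_card ?_) (hdegF (Mfn y0))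
    intro y hy
    rw [Finset.mem_filter] at hy
    obtain ⟨hyY1, hle1, hle2⟩ := hy
    rw [hY1def, Finset.mem_filter] at hyY1
    obtain ⟨hyY, hcls⟩ := hyY1
    rw [Finset.mem_filter]
    refine ⟨hyY, ?_⟩
    by_cases hcc : (Mfn y0).val = (mfn y).val
    · rw [Fin.ext hcc]
      exact hAdjm y hyY
    · have heq : Mfn y0 = Mfn y := Fin.ext (by omega)
      rw [heq]
      exact hAdjM y hyY
  have hB2 : ∀ y0 ∈ Y2, (Y2.filter (fun y =>
      (mfn y).val ≤ (Mfn y0).val ∧ (Mfn y0).val ≤ (Mfn y).val)).card ≤ 3 := by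
    intro y0 hy0
    have hy0Y : y0 ∈ Y := hY2sub hy0
    have hy0w : (mfn y0).val + 2 ≤ (Mfn y0).val := by
      rw [hY2def, Finset.mem_filter] at hy0; exact hy0.2
    have hmuniq : ∀ y1 ∈ Y2, ∀ y2 ∈ Y2, (mfn y1).val = (mfn y2).val → y1 = y2 := by
      intro y1 hy1 y2 hy2 hmeq
      by_contra hne
      have hy1Y : y1 ∈ Y := hY2sub hy1
      have hy2Y : y2 ∈ Y := hY2sub hy2
      have hw1 : (mfn y1).val + 2 ≤ (Mfn y1).val := by
        rw [hY2def, Finset.mem_filter] at hy1; exact hy1.2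
      have hw2 : (mfn y2).val + 2 ≤ (Mfn y2).val := by
        rw [hY2def, Finset.mem_filter] at hy2; exact hy2.2
      rcases le_total (Mfn y1).val (Mfn y2).val with hle | hle
      · exact LT1 y2 hy2Y y1 hy1Y (Ne.symm hne) (by omega) hle hw1
      · exact LT1 y1 hy1Y y2 hy2Y hne (by omega) hle hw2
    have htri : ∀ y ∈ Y2.filter (fun y =>
        (mfn y).val ≤ (Mfn y0).val ∧ (Mfn y0).val ≤ (Mfn y).val),
        y = y0 ∨ (mfn y).val = (Mfn y0).val - 1 ∨ (mfn y).val = (Mfn y0).val := by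
      intro y hyF
      rw [Finset.mem_filter] at hyF
      obtain ⟨hyY2, hc1, hc2⟩ := hyF
      have hyY : y ∈ Y := hY2sub hyY2
      have hyw : (mfn y).val + 2 ≤ (Mfn y).val := by
        rw [hY2def, Finset.mem_filter] at hyY2; exact hyY2.2
      by_contra hcon
      push_neg at hcon
      obtain ⟨hne0, hne1, hne2⟩ := hcon
      by_cases hcase : (mfn y).val ≤ (mfn y0).val
      · exact LT1 y hyY y0 hy0Y hne0 hcase hc2 hy0w
      · push_neg at hcase
        exact LT2 y0 hy0Y y hyY (Ne.symm hne0) (by omega) (by omega) hc2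
    refine le_trans (Finset.card_le_card (show Y2.filter (fun y =>
        (mfn y).val ≤ (Mfn y0).val ∧ (Mfn y0).val ≤ (Mfn y).val) ⊆
        insert y0 ((Y2.filter (fun y => (mfn y).val = (Mfn y0).val - 1)) ∪
          (Y2.filter (fun y => (mfn y).val = (Mfn y0).val))) from ?_)) ?_
    · intro y hy
      rcases htri y hy with rfl | h | h
      · exact Finset.mem_insert_self _ _
      · exact Finset.mem_insert_of_mem (Finset.mem_union_left _
          (Finset.mem_filter.2 ⟨(Finset.mem_filter.1 hy).1, h⟩))
      · exact Finset.mem_insert_of_mem (Finset.mem_union_right _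
          (Finset.mem_filter.2 ⟨(Finset.mem_filter.1 hy).1, h⟩))
    · have hcard1 : (Y2.filter (fun y => (mfn y).val = (Mfn y0).val - 1)).card ≤ 1 := by
        apply Finset.card_le_one.2
        intro a ha b hb
        rw [Finset.mem_filter] at ha hb
        exact hmuniq a ha.1 b hb.1 (by omega)
      have hcard2 : (Y2.filter (fun y => (mfn y).val = (Mfn y0).val)).card ≤ 1 := by
        apply Finset.card_le_one.2
        intro a ha b hb
        rw [Finset.mem_filter] at ha hb
        exact hmuniq a ha.1 b hb.1 (by omega)
      have h3 := Finset.card_insert_le y0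
        ((Y2.filter (fun y => (mfn y).val = (Mfn y0).val - 1)) ∪
          (Y2.filter (fun y => (mfn y).val = (Mfn y0).val)))
      have h4 := Finset.card_union_le (Y2.filter (fun y => (mfn y).val = (Mfn y0).val - 1))
        (Y2.filter (fun y => (mfn y).val = (Mfn y0).val))
      omega
  -- generic assembly of the final set from a greedy selection
  have build : ∀ (x : Fin s → V), (∀ l, x l ∈ Y) →
      (∀ l l', l < l' → (Mfn (x l)).val < (mfn (x l')).val) →
      ∃ S : Finset V, S ⊆ Y ∧ S.card = s ∧ IsAlignment G P S ∧
        (∀ z ∈ S, ∃ l, x l = z) := by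
    intro x hxY hxord
    have hinj : Function.Injective x := by
      intro l l' heq
      by_contra hne
      rcases lt_trichotomy l l' with hlt | heqq | hlt
      · have h1 := hxord l l' hlt
        have h2 := hmM (x l') (hxY l')
        rw [heq] at h1
        omega
      · exact hne heqq
      · have h1 := hxord l' l hlt
        have h2 := hmM (x l') (hxY l')
        rw [heq] at h1
        omega
    refine ⟨Finset.image x Finset.univ, ?_, ?_, ⟨?_, ?_, s, x, hinj, ?_, ?_,
      fun l => (mfn (x l)).val, fun l => (Mfn (x l)).val, ?_, hxord, ?_, ?_⟩, ?_⟩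
    · intro z hz; obtain ⟨l, _, rfl⟩ := Finset.mem_image.1 hz; exact hxY l
    · rw [Finset.card_image_of_injective _ hinj, Finset.card_univ, Fintype.card_fin]
    · intro z hz; obtain ⟨l, _, rfl⟩ := Finset.mem_image.1 hz; exact hdisj _ (hxY l)
    · intro z hz; obtain ⟨l, _, rfl⟩ := Finset.mem_image.1 hz; exact hnbr _ (hxY l)
    · intro l; exact Finset.mem_image.2 ⟨l, Finset.mem_univ _, rfl⟩
    · intro z hz; obtain ⟨l, _, rfl⟩ := Finset.mem_image.1 hz; exact ⟨l, rfl⟩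
    · intro l; exact hmM (x l) (hxY l)
    · intro l; exact (Mfn (x l)).isLt
    · intro l nn hadj
      have hnn : nn ∈ Nb (x l) := (hNbmem _ _).2 hadj
      have h1 : (mfn (x l)).val ≤ nn.val := ((hspec (x l) (hxY l)).2.2 nn hnn).1
      have h2 : nn.val ≤ (Mfn (x l)).val := ((hspec (x l) (hxY l)).2.2 nn hnn).2
      exact ⟨h1, h2⟩
    · intro z hz; obtain ⟨l, _, rfl⟩ := Finset.mem_image.1 hz; exact ⟨l, rfl⟩
  -- case analysis on which class is large enough
  by_cases hc0 : s * ((d - 1) + 1) ≤ Y0.card + (d - 1)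
  · obtain ⟨x, hxC, hxord⟩ := greedy (fun y => (mfn y).val) (fun y => (Mfn y).val) (d - 1) s Y0
      (fun y hy => hmM y (hY0sub hy)) hB0 hc0
    obtain ⟨S, hSY, hScard, hSalign, hSx⟩ := build x (fun l => hY0sub (hxC l)) hxord
    refine ⟨S, hSY, hScard, hSalign, Or.inr (Or.inl ?_)⟩
    intro z hz
    obtain ⟨l, rfl⟩ := hSx z hz
    have hcls := hxC l
    rw [hY0def, Finset.mem_filter] at hcls
    exact hSpikyPt _ hcls.1 hcls.2
  by_cases hc1 : s * ((d - 1) + 1) ≤ Y1.card + (d - 1)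
  · obtain ⟨x, hxC, hxord⟩ := greedy (fun y => (mfn y).val) (fun y => (Mfn y).val) (d - 1) s Y1
      (fun y hy => hmM y (hY1sub hy)) hB1 hc1
    obtain ⟨S, hSY, hScard, hSalign, hSx⟩ := build x (fun l => hY1sub (hxC l)) hxord
    refine ⟨S, hSY, hScard, hSalign, Or.inr (Or.inr ?_)⟩
    intro z hz
    obtain ⟨l, rfl⟩ := hSx z hz
    have hcls := hxC l
    rw [hY1def, Finset.mem_filter] at hcls
    exact hTriPt _ hcls.1 hcls.2
  by_cases hc2 : s * (3 + 1) ≤ Y2.card + 3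
  · obtain ⟨x, hxC, hxord⟩ := greedy (fun y => (mfn y).val) (fun y => (Mfn y).val) 3 s Y2
      (fun y hy => hmM y (hY2sub hy)) hB2 hc2
    obtain ⟨S, hSY, hScard, hSalign, hSx⟩ := build x (fun l => hY2sub (hxC l)) hxord
    refine ⟨S, hSY, hScard, hSalign, Or.inl ?_⟩
    intro z hz
    obtain ⟨l, rfl⟩ := hSx z hz
    have hcls := hxC l
    rw [hY2def, Finset.mem_filter] at hcls
    exact hWidePt _ hcls.1 hcls.2
  · exfalso
    have e0 : (d - 1) + 1 = d := by omega
    rw [e0] at hc0 hc1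
    have e1 : 3 * s * (d + 1) = 3 * (s * d) + 3 * s := by ring
    have e2 : s * (3 + 1) = 4 * s := by ring
    have hsd : s ≤ s * d := Nat.le_mul_of_pos_right s hd
    rw [e2] at hc2
    omega


end Paper
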